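/- For every δ > 0 and every z > γ_δ, one has φ(z − log p_δ⁻¹(z)) − φ(z) > 0, so that Ψ_δ(z) := e^{−z} / (φ(z − log p_δ⁻¹(z)) − φ(z)) is well defined, finite and strictly positive on (γ_δ, ∞). -/

import Mathlib

open MeasureTheory Set Real

lemma aux_integrable (a : ℝ) (ha : 0 < a) :
    IntegrableOn (fun u : ℝ => 1 / (u * Real.exp u)) (Set.Ioi a) := by
  have hbound : IntegrableOn (fun u : ℝ => (1 / a) * Real.exp (-u)) (Set.Ioi a) := by
    have := (exp_neg_integrableOn_Ioi a one_pos).const_mul (1 / a)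
    simpa [neg_mul, one_mul, IntegrableOn] using this
  apply Integrable.mono' hbound
  · apply ContinuousOn.aestronglyMeasurable _ measurableSet_Ioi
    apply ContinuousOn.div continuousOn_const
    · exact (continuousOn_id.mul (Real.continuous_exp.continuousOn))
    · intro x hx
      have hx0 : 0 < x := lt_trans ha hx
      positivity
  · filter_upwards [ae_restrict_mem measurableSet_Ioi] with u hu
    have hu0 : 0 < u := lt_trans ha hu
    rw [Real.norm_eq_abs, abs_of_pos (by positivity),
      show 1 / (u * Real.exp u) = (1 / u) * Real.exp (-u) by
        rw [Real.exp_neg]; field_simp]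
    gcongr
    exact hu.le

lemma aux_phi_pos (φ : ℝ → ℝ)
    (hφ : ∀ x : ℝ, φ x = ∫ u in Set.Ioi x, 1 / (u * Real.exp u))
    (a b : ℝ) (ha : 0 < a) (hab : a < b) : 0 < φ a - φ b := by
  have hb : 0 < b := lt_trans ha hab
  have h1 : IntegrableOn (fun u : ℝ => 1 / (u * Real.exp u)) (Set.Ioi a) :=
    aux_integrable a ha
  have h2 : IntegrableOn (fun u : ℝ => 1 / (u * Real.exp u)) (Set.Ioi b) :=
    aux_integrable b hb
  have h3 : IntegrableOn (fun u : ℝ => 1 / (u * Real.exp u)) (Set.Ioc a b) :=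
    h1.mono_set (Set.Ioc_subset_Ioi_self)
  have hsplit : φ a = (∫ u in Set.Ioc a b, 1 / (u * Real.exp u)) + φ b := by
    rw [hφ, hφ, ← setIntegral_union (Set.Ioc_disjoint_Ioi le_rfl) measurableSet_Ioi h3 h2,
      Set.Ioc_union_Ioi_eq_Ioi hab.le]
  have hpos : 0 < ∫ u in Set.Ioc a b, 1 / (u * Real.exp u) := by
    rw [← intervalIntegral.integral_of_le hab.le]
    apply intervalIntegral.intervalIntegral_pos_of_pos_on
    · exact (intervalIntegrable_iff_integrableOn_Ioc_of_le hab.le).mpr h3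
    · intro x hx
      have : 0 < x := lt_trans ha hx.1
      positivity
    · exact hab
  linarith

theorem stmt_5 (δ : ℝ) (hδ : 0 < δ)
    (φ : ℝ → ℝ) (hφ : ∀ x : ℝ, φ x = ∫ u in Set.Ioi x, 1 / (u * Real.exp u))
    (q : ℝ → ℝ)
    (hq₁ : ∀ y : ℝ, max δ 1 ≤ y → q (1 + δ / y + Real.log y) = y)
    (hq₂ : ∀ z : ℝ, min (1 + δ) (2 + Real.log δ) ≤ z →
      max δ 1 ≤ q z ∧ 1 + δ / q z + Real.log (q z) = z) :
    ∀ z : ℝ, min (1 + δ) (2 + Real.log δ) < z →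
      0 < φ (z - Real.log (q z)) - φ z ∧
      0 < Real.exp (-z) / (φ (z - Real.log (q z)) - φ z) := by
  intro z hz
  obtain ⟨hy1, hy2⟩ := hq₂ z hz.le
  set y := q z with hy
  have hyδ : δ ≤ y := le_trans (le_max_left _ _) hy1
  have hy01 : (1:ℝ) ≤ y := le_trans (le_max_right _ _) hy1
  have hy0 : 0 < y := lt_of_lt_of_le one_pos hy01
  -- show y > 1
  have hygt : 1 < y := by
    rcases lt_or_eq_of_le hy01 with h | h
    · exact h
    · exfalso
      have hyy : y = 1 := h.symm
      -- y = 1, so z = 1 + δ, and δ ≤ 1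
      have hz1 : z = 1 + δ := by
        rw [hyy] at hy2; simp at hy2; linarith
      have hδ1 : δ ≤ 1 := hyy ▸ hyδ
      rcases lt_or_eq_of_le hδ1 with hd | hd
      · -- δ < 1 : contradiction with hq₂ at z₀ = 2 + log δ
        have hlog : Real.log δ < δ - 1 := Real.log_lt_sub_one_of_pos hδ (ne_of_lt hd)
        have hmin : min (1 + δ) (2 + Real.log δ) = 2 + Real.log δ := by
          apply min_eq_right; linarith
        obtain ⟨hw1, hw2⟩ := hq₂ (2 + Real.log δ) hmin.le
        set w := q (2 + Real.log δ) with hw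
        have hw01 : (1:ℝ) ≤ w := le_trans (le_max_right _ _) hw1
        have hw0 : 0 < w := lt_of_lt_of_le one_pos hw01
        have hlw : 1 - 1 / w ≤ Real.log w := by
          have := Real.log_le_sub_one_of_pos (show (0:ℝ) < 1 / w by positivity)
          rw [Real.log_div one_ne_zero (ne_of_gt hw0), Real.log_one] at this
          linarith
        have h1w : 1 / w ≤ 1 := by rw [div_le_one hw0]; exact hw01
        have e1 : δ * (1 - 1 / w) ≤ 1 - 1 / w := by
          nlinarith
        have e2 : δ - δ / w = δ * (1 - 1 / w) := by ring
        -- then 2 + log δ = 1 + δ/w + log w ≥ 1 + δ > 2 + log δ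
        linarith
      · -- δ = 1 : then z = 2 but γ = 2 and z > γ
        subst hd
        simp [Real.log_one] at hz
        norm_num at hz1
        obtain h2 | h2 := hz <;> linarith
  have hlogy : 0 < Real.log y := Real.log_pos hygt
  have ha : z - Real.log y = 1 + δ / y := by linarith
  have hapos : 0 < z - Real.log y := by
    rw [ha]; positivity
  have hab : z - Real.log y < z := by linarith
  have hmain : 0 < φ (z - Real.log y) - φ z := aux_phi_pos φ hφ _ _ hapos hab
  exact ⟨hmain, div_pos (Real.exp_pos _) hmain⟩
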